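/- The point E₄ = ((rflK - rfμ - τlKb)/(rfq), τ/f, 0, K(rf - bτ)/(rf)) is an equilibrium of the logistic ecoepidemic system, and its coordinates are all nonnegative if rf(lK - μ) ≥ bKlτ. -/

import Mathlib

open Polynomial

noncomputable def logisticRHS (g f τ l β q μ c ν r b K : ℝ) (x : Fin 4 → ℝ) : Fin 4 → ℝ :=
  ![x 0 * (g * x 2 + f * x 1 - τ),
    x 1 * (l * x 3 - β * x 2 - q * x 0 - μ),
    x 2 * (β * x 1 - c * x 0 - ν),
    x 3 * (r * (1 - x 3 / K) - b * x 1)]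

noncomputable def logisticJac (g f τ l β q μ c ν r b K : ℝ) (x : Fin 4 → ℝ) :
    Matrix (Fin 4) (Fin 4) ℝ :=
  Matrix.of ![
    ![g * x 2 + f * x 1 - τ, f * x 0, g * x 0, 0],
    ![-(q * x 1), l * x 3 - β * x 2 - q * x 0 - μ, -(β * x 1), l * x 1],
    ![-(c * x 2), β * x 2, β * x 1 - c * x 0 - ν, 0],
    ![0, -(b * x 3), 0, r * (1 - x 3 / K) - b * x 1 - r * x 3 / K]]

theorem stmt13 (g f τ l β q μ c ν r b K : ℝ)
    (hg : 0 < g) (hf : 0 < f) (hτ : 0 < τ) (hl : 0 < l) (hβ : 0 < β)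
    (hq : 0 < q) (hμ : 0 < μ) (hc : 0 < c) (hν : 0 < ν) (hr : 0 < r) (hb : 0 < b)
    (hK : 0 < K) :
    logisticRHS g f τ l β q μ c ν r b K
      ![(r * f * l * K - r * f * μ - τ * l * K * b) / (r * f * q), τ / f, 0,
        K * (r * f - b * τ) / (r * f)] = 0 ∧
    (b * K * l * τ ≤ r * f * (l * K - μ) →
      0 ≤ (r * f * l * K - r * f * μ - τ * l * K * b) / (r * f * q) ∧
      0 ≤ τ / f ∧ (0:ℝ) ≤ 0 ∧ 0 ≤ K * (r * f - b * τ) / (r * f)) := by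
  have hf' := hf.ne'
  have hr' := hr.ne'
  have hq' := hq.ne'
  have hK' := hK.ne'
  constructor
  · funext i
    fin_cases i
    · show _ * (g * (0:ℝ) + f * (τ / f) - τ) = 0
      field_simp
      simp
    · show τ / f * (l * (K * (r * f - b * τ) / (r * f)) - β * 0 -
          q * ((r * f * l * K - r * f * μ - τ * l * K * b) / (r * f * q)) - μ) = 0
      field_simp
      ring
    · show (0:ℝ) * _ = 0
      exact zero_mul _
    · show K * (r * f - b * τ) / (r * f) *
          (r * (1 - K * (r * f - b * τ) / (r * f) / K) - b * (τ / f)) = 0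
      field_simp
      ring
  · intro h
    refine ⟨div_nonneg (by nlinarith) (by positivity),
      le_of_lt (div_pos hτ hf), le_refl 0,
      div_nonneg (by nlinarith [mul_pos (mul_pos hr hf) hμ, mul_pos hl hK]) (by positivity)⟩
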